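/- Let D ⊂ ℝ² be a bounded smooth domain, G = (−Δ)⁻¹ with zero Dirichlet boundary condition, ω̄ ∈ L^∞(D) with ω̄ = g(Gω̄) a.e. in D, where g : ℝ → ℝ is nondecreasing on [m, M] = [min Gω̄, max Gω̄], strictly increasing on (−∞, m], continuous, and satisfies g(s) → ±∞ as s → ±∞. If λ̄ ∈ ℝ satisfies ∫_D g(Gω̄ − λ̄) dx = ∫_D ω̄ dx, then λ̄ = 0. -/

import Mathlib

open MeasureTheory Filter Set Topology

lemma aux13 (D : Set (EuclideanSpace ℝ (Fin 2))) (hDo : IsOpen D)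
    (f : EuclideanSpace ℝ (Fin 2) → ℝ)
    (hf : ContinuousOn f (closure D))
    (hf0 : ∀ x, 0 ≤ f x)
    (x₀ : EuclideanSpace ℝ (Fin 2)) (hx₀ : x₀ ∈ closure D) (hfx₀ : 0 < f x₀)
    (hint : IntegrableOn f D volume)
    (hzero : ∫ x, f x ∂(volume.restrict D) = 0) : False := by
  set μ := volume.restrict D with hμ
  have haez : f =ᵐ[μ] 0 :=
    (integral_eq_zero_iff_of_nonneg hf0 hint).mp hzero
  have hnull : μ {x | f x ≠ 0} = 0 := by
    have := haez
    rw [Filter.EventuallyEq, ae_iff] at this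
    simpa using this
  have hc : ContinuousWithinAt f (closure D) x₀ := hf x₀ hx₀
  have hev : ∀ᶠ x in 𝓝[closure D] x₀, 0 < f x :=
    hc.eventually (eventually_gt_nhds hfx₀)
  have hev' : ∀ᶠ x in 𝓝[D] x₀, 0 < f x :=
    hev.filter_mono (nhdsWithin_mono x₀ subset_closure)
  rw [eventually_iff, mem_nhdsWithin] at hev'
  obtain ⟨U, hUo, hx₀U, hU⟩ := hev'
  have hne : (U ∩ D).Nonempty := mem_closure_iff.mp hx₀ U hUo hx₀U
  have hpos : 0 < volume (U ∩ D) := (hUo.inter hDo).measure_pos volume hne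
  have hsub : U ∩ D ⊆ {x | f x ≠ 0} := fun x hx => ne_of_gt (hU hx)
  have hle : μ (U ∩ D) ≤ μ {x | f x ≠ 0} := measure_mono hsub
  rw [hnull, le_zero_iff] at hle
  rw [hμ, Measure.restrict_apply ((hUo.measurableSet).inter hDo.measurableSet),
    inter_assoc, inter_self] at hle
  exact absurd hle hpos.ne'

/-- Let `D ⊂ ℝ²` be a bounded (smooth) domain, `G` the Green
operator of `-Δ` with zero Dirichlet boundary data, `ω̄ ∈ L^∞(D)` with
`ω̄ = g(Gω̄)` a.e., where `g` is continuous, nondecreasing, strictly increasing on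
`(-∞, m]` and on `[M, +∞)` (`m = min_{D̄} Gω̄`, `M = max_{D̄} Gω̄`), and
`g(s) → ±∞` as `s → ±∞`.  If `∫_D g(Gω̄ - λ̄) = ∫_D ω̄` then `λ̄ = 0`. -/
theorem stmt13 (D : Set (EuclideanSpace ℝ (Fin 2)))
    (hDo : IsOpen D) (hDne : D.Nonempty) (hDb : Bornology.IsBounded D)
    (G : (EuclideanSpace ℝ (Fin 2) → ℝ) → (EuclideanSpace ℝ (Fin 2) → ℝ))
    (omb : EuclideanSpace ℝ (Fin 2) → ℝ)
    (homb : MemLp omb ⊤ (volume.restrict D))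
    (hcont : ContinuousOn (G omb) (closure D))
    (m M : ℝ)
    (hm : IsLeast (G omb '' closure D) m)
    (hM : IsGreatest (G omb '' closure D) M)
    (g : ℝ → ℝ) (hgc : Continuous g) (hgm : Monotone g)
    (hgsm : StrictMonoOn g (Set.Iic m)) (hgsM : StrictMonoOn g (Set.Ici M))
    (hgtop : Tendsto g atTop atTop) (hgbot : Tendsto g atBot atBot)
    (heq : ∀ᵐ x ∂(volume.restrict D), omb x = g (G omb x))
    (lb : ℝ)
    (hlb : ∫ x, g (G omb x - lb) ∂(volume.restrict D)
        = ∫ x, omb x ∂(volume.restrict D)) :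
    lb = 0 := by
  by_contra hlb0
  have hK : IsCompact (closure D) := hDb.isCompact_closure
  have hsub : D ⊆ closure D := subset_closure
  have hc1 : ContinuousOn (fun x => g (G omb x)) (closure D) :=
    hgc.comp_continuousOn hcont
  have hc2 : ContinuousOn (fun x => g (G omb x - lb)) (closure D) :=
    hgc.comp_continuousOn (hcont.sub continuousOn_const)
  have hint1 : IntegrableOn (fun x => g (G omb x)) D volume :=
    (hc1.integrableOn_compact hK).mono_set hsub
  have hint2 : IntegrableOn (fun x => g (G omb x - lb)) D volume :=
    (hc2.integrableOn_compact hK).mono_set hsub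
  have hieq : ∫ x, g (G omb x - lb) ∂(volume.restrict D)
      = ∫ x, g (G omb x) ∂(volume.restrict D) := by
    rw [hlb]; exact integral_congr_ae heq
  rcases lt_or_gt_of_ne hlb0 with hneg | hpos
  · -- lb < 0 : use maximum point
    obtain ⟨x₀, hx₀c, hGx₀⟩ := hM.1
    refine aux13 D hDo (fun x => g (G omb x - lb) - g (G omb x))
      (hc2.sub hc1) (fun x => ?_) x₀ hx₀c ?_ (hint2.sub hint1) ?_
    · exact sub_nonneg.mpr (hgm (le_sub_self_iff _ |>.mpr hneg.le))
    · simp only [hGx₀]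
      refine sub_pos.mpr (hgsM (mem_Ici.mpr le_rfl)
        (mem_Ici.mpr ((le_sub_self_iff _).mpr hneg.le)) ?_)
      linarith
    · rw [integral_sub hint2 hint1, hieq, sub_self]
  · -- lb > 0 : use minimum point
    obtain ⟨x₀, hx₀c, hGx₀⟩ := hm.1
    refine aux13 D hDo (fun x => g (G omb x) - g (G omb x - lb))
      (hc1.sub hc2) (fun x => ?_) x₀ hx₀c ?_ (hint1.sub hint2) ?_
    · exact sub_nonneg.mpr (hgm (sub_le_self _ hpos.le))
    · simp only [hGx₀]
      exact sub_pos.mpr (hgsm (mem_Iic.mpr (sub_le_self _ hpos.le))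
        (mem_Iic.mpr le_rfl) (sub_lt_self _ hpos))
    · rw [integral_sub hint1 hint2, hieq, sub_self]
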